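/- Frobenius-norm bound for the residual of a multilinear projection. Let X be an order-d tensor of dimensions p_1×⋯×p_d with d ≥ 2, and for each l = 2,…,d let U_l ∈ ℝ^{p_l×r_l} satisfy U_lᵀU_l = I_{r_l}. Let W be any real matrix with ∏_{l≥2} p_l rows such that WᵀW = I and (U_2⊗U_3⊗⋯⊗U_d)ᵀ W = 0 (its columns are orthonormal and orthogonal to the columns of U_2⊗⋯⊗U_d). Then ‖M_1(X)·W‖_F² ≤ Σ_{l=2}^d ( ‖X‖_F² − ‖U_lᵀ M_l(X)‖_F² ). -/

import Mathlib

open Matrix BigOperators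

noncomputable section

/-- Index set of an order-`d` tensor with mode sizes `p`. -/
abbrev TIdx {d : ℕ} (p : Fin d → ℕ) := ∀ l, Fin (p l)

/-- Squared Frobenius norm of a tensor. -/
def tfrobSq {d : ℕ} {p : Fin d → ℕ} (X : TIdx p → ℝ) : ℝ := ∑ i, X i ^ 2

/-- Squared Frobenius norm of a matrix. -/
def mfrobSq {ι κ : Type*} [Fintype ι] [Fintype κ] (A : Matrix ι κ ℝ) : ℝ :=
  ∑ i, ∑ j, A i j ^ 2

/-- Assemble a full tensor index from a mode-`k` index and the remaining indices. -/
def mergeIdx {d : ℕ} (p : Fin d → ℕ) (k : Fin d) (i : Fin (p k))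
    (j : ∀ l : {l : Fin d // l ≠ k}, Fin (p l.1)) : TIdx p :=
  fun l => if h : l = k then Fin.cast (congrArg p h.symm) i else j ⟨l, h⟩

/-- Mode-`k` matricization of a tensor. -/
def matricize {d : ℕ} {p : Fin d → ℕ} (k : Fin d) (X : TIdx p → ℝ) :
    Matrix (Fin (p k)) (∀ l : {l : Fin d // l ≠ k}, Fin (p l.1)) ℝ :=
  fun i j => X (mergeIdx p k i j)

/-- Kronecker product of a finite family of matrices. -/
def kron {ι : Type*} [Fintype ι] {m n : ι → ℕ}
    (V : ∀ l, Matrix (Fin (m l)) (Fin (n l)) ℝ) :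
    Matrix (∀ l, Fin (m l)) (∀ l, Fin (n l)) ℝ :=
  fun i j => ∏ l, V l (i l) (j l)

-- auxiliary lemmas

lemma mfrobSq_eq_trace {ι κ : Type*} [Fintype ι] [Fintype κ] (A : Matrix ι κ ℝ) :
    mfrobSq A = (Aᵀ * A).trace := by
  simp only [mfrobSq, Matrix.trace, Matrix.diag, Matrix.mul_apply, Matrix.transpose_apply]
  rw [Finset.sum_comm]
  simp [sq]

lemma mfrobSq_nonneg {ι κ : Type*} [Fintype ι] [Fintype κ] (A : Matrix ι κ ℝ) :
    0 ≤ mfrobSq A :=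
  Finset.sum_nonneg fun _ _ => Finset.sum_nonneg fun _ _ => sq_nonneg _

lemma trace_proj_nonneg {ι κ : Type*} [Fintype ι] [Fintype κ]
    (A : Matrix ι κ ℝ) (G : Matrix κ κ ℝ) (hG : Gᵀ * G = G) :
    0 ≤ (Aᵀ * A * G).trace := by
  have h1 : Aᵀ * A * G = (Aᵀ * (A * Gᵀ)) * G := by
    rw [← Matrix.mul_assoc, Matrix.mul_assoc (Aᵀ * A), hG]
  rw [h1, Matrix.trace_mul_comm, ← Matrix.mul_assoc]
  have h2 : G * Aᵀ = (A * Gᵀ)ᵀ := by simp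
  rw [h2, ← mfrobSq_eq_trace]
  exact mfrobSq_nonneg _

lemma kron_mul {ι : Type*} [Fintype ι] [DecidableEq ι] {m n q : ι → ℕ}
    (A : ∀ l, Matrix (Fin (m l)) (Fin (n l)) ℝ)
    (B : ∀ l, Matrix (Fin (n l)) (Fin (q l)) ℝ) :
    kron A * kron B = kron (fun l => A l * B l) := by
  ext i j
  simp only [kron, Matrix.mul_apply]
  have h := Finset.prod_univ_sum (fun l : ι => (Finset.univ : Finset (Fin (n l))))
    (fun l x => A l (i l) x * B l x (j l))
  rw [Fintype.piFinset_univ] at h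
  calc ∑ x : ∀ l, Fin (n l), (∏ l, A l (i l) (x l)) * ∏ l, B l (x l) (j l)
      = ∑ x : ∀ l, Fin (n l), ∏ l, (A l (i l) (x l) * B l (x l) (j l)) := by
        simp [Finset.prod_mul_distrib]
    _ = ∏ l, ∑ x, A l (i l) x * B l x (j l) := h.symm
    _ = ∏ l, (A l * B l) (i l) (j l) := by simp [Matrix.mul_apply]

lemma kron_transpose {ι : Type*} [Fintype ι] {m n : ι → ℕ}
    (A : ∀ l, Matrix (Fin (m l)) (Fin (n l)) ℝ) :
    (kron A)ᵀ = kron (fun l => (A l)ᵀ) := rfl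

lemma kron_one {ι : Type*} [Fintype ι] [DecidableEq ι] {m : ι → ℕ} :
    kron (fun l : ι => (1 : Matrix (Fin (m l)) (Fin (m l)) ℝ)) = 1 := by
  ext i j
  by_cases h : i = j
  · subst h; simp [kron, Matrix.one_apply]
  · obtain ⟨l, hl⟩ := Function.ne_iff.mp h
    rw [Matrix.one_apply_ne h]
    exact Finset.prod_eq_zero (Finset.mem_univ l) (Matrix.one_apply_ne hl)


section Emat

variable {d : ℕ} {k₀ : Fin d} {p r : Fin d → ℕ}

/-- Kronecker product of mode projectors over modes in `s`, identity elsewhere. -/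
def Emat (U : ∀ l : {l : Fin d // l ≠ k₀}, Matrix (Fin (p l.1)) (Fin (r l.1)) ℝ)
    (s : Finset {l : Fin d // l ≠ k₀}) :
    Matrix (∀ l : {l : Fin d // l ≠ k₀}, Fin (p l.1))
      (∀ l : {l : Fin d // l ≠ k₀}, Fin (p l.1)) ℝ :=
  kron (fun m => if m ∈ s then U m * (U m)ᵀ else 1)

variable (U : ∀ l : {l : Fin d // l ≠ k₀}, Matrix (Fin (p l.1)) (Fin (r l.1)) ℝ)

lemma Emat_transpose (s : Finset {l : Fin d // l ≠ k₀}) : (Emat U s)ᵀ = Emat U s := by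
  have h : ∀ mo : {l : Fin d // l ≠ k₀},
      (if mo ∈ s then U mo * (U mo)ᵀ else 1)ᵀ = (if mo ∈ s then U mo * (U mo)ᵀ else 1) := by
    intro mo; split <;> simp
  rw [Emat, kron_transpose]
  exact congrArg kron (funext h)

lemma Emat_mul (hU : ∀ l, (U l)ᵀ * U l = 1) (s t : Finset {l : Fin d // l ≠ k₀}) :
    Emat U s * Emat U t = Emat U (s ∪ t) := by
  have h : ∀ mo : {l : Fin d // l ≠ k₀},
      (if mo ∈ s then U mo * (U mo)ᵀ else 1) * (if mo ∈ t then U mo * (U mo)ᵀ else 1)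
        = (if mo ∈ s ∪ t then U mo * (U mo)ᵀ else 1) := by
    intro mo
    by_cases hs : mo ∈ s <;> by_cases ht : mo ∈ t <;>
      simp [hs, ht, Finset.mem_union]
    rw [Matrix.mul_assoc, ← Matrix.mul_assoc ((U mo)ᵀ), hU mo, Matrix.one_mul]
  rw [Emat, Emat, Emat, kron_mul]
  exact congrArg kron (funext h)

lemma Emat_empty : Emat U (∅ : Finset {l : Fin d // l ≠ k₀}) = 1 := by
  rw [Emat]
  simp only [Finset.notMem_empty, if_false]
  exact kron_one

lemma Emat_univ : Emat U (Finset.univ : Finset {l : Fin d // l ≠ k₀}) =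
    kron U * (kron U)ᵀ := by
  rw [kron_transpose, kron_mul, Emat]
  simp

end Emat

section Reindex

variable {d : ℕ} {p : Fin d → ℕ}

/-- The merge map as an equivalence. -/
def modeEquiv (p : Fin d → ℕ) (k : Fin d) :
    (Fin (p k) × ∀ l : {l : Fin d // l ≠ k}, Fin (p l.1)) ≃ TIdx p where
  toFun x := mergeIdx p k x.1 x.2
  invFun i := (i k, fun l => i l.1)
  left_inv x := by
    obtain ⟨i, j⟩ := x
    refine Prod.ext ?_ ?_
    · simp [mergeIdx]
    · funext l
      simp [mergeIdx, l.2]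
  right_inv i := by
    funext l
    simp only [mergeIdx]
    split
    · rename_i h
      subst h
      rfl
    · rfl

lemma tfrobSq_eq_mfrobSq (k : Fin d) (X : TIdx p → ℝ) :
    tfrobSq X = mfrobSq (matricize k X) := by
  rw [tfrobSq, mfrobSq, ← Equiv.sum_comp (modeEquiv p k) (fun i => X i ^ 2),
    Fintype.sum_prod_type]
  rfl

lemma merge_update (k : Fin d) (i : Fin (p k))
    (j : ∀ l : {l : Fin d // l ≠ k}, Fin (p l.1)) (l : {l : Fin d // l ≠ k})
    (a : Fin (p l.1)) :
    mergeIdx p k i (Function.update j l a) = Function.update (mergeIdx p k i j) l.1 a := by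
  funext m
  by_cases hm : m = l.1
  · subst hm
    rw [Function.update_self]
    simp only [mergeIdx, dif_neg l.2]
    exact Function.update_self l a j
  · rw [Function.update_of_ne hm]
    simp only [mergeIdx]
    split
    · rfl
    · rename_i h
      rw [Function.update_of_ne]
      intro hc
      exact hm (congrArg Subtype.val hc)

lemma update_merge (k : Fin d) (a a' : Fin (p k))
    (b : ∀ l : {l : Fin d // l ≠ k}, Fin (p l.1)) :
    Function.update (mergeIdx p k a b) k a' = mergeIdx p k a' b := by
  funext m
  by_cases hm : m = k
  · subst hm
    rw [Function.update_self]
    simp [mergeIdx]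
  · rw [Function.update_of_ne hm]
    simp [mergeIdx, hm]

/-- Collapsing a product of Kronecker deltas in all coordinates except `l`. -/
lemma delta_collapse {k : Fin d} (l : {l : Fin d // l ≠ k})
    (j : ∀ m : {l : Fin d // l ≠ k}, Fin (p m.1))
    (g : (∀ m : {l : Fin d // l ≠ k}, Fin (p m.1)) → ℝ) :
    ∑ j' : ∀ m : {l : Fin d // l ≠ k}, Fin (p m.1),
      (∏ m : {m : {l : Fin d // l ≠ k} // m ≠ l}, if j' m.1 = j m.1 then (1:ℝ) else 0) * g j'
      = ∑ a : Fin (p l.1), g (Function.update j l a) := by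
  classical
  rw [← Equiv.sum_comp (Equiv.piSplitAt l (fun m : {l : Fin d // l ≠ k} => Fin (p m.1))).symm,
    Fintype.sum_prod_type]
  refine Finset.sum_congr rfl fun a _ => ?_
  rw [Finset.sum_eq_single (fun m : {m : {l : Fin d // l ≠ k} // m ≠ l} => j m.1)]
  · have he : (Equiv.piSplitAt l (fun m : {l : Fin d // l ≠ k} => Fin (p m.1))).symm
        (a, fun m => j m.1) = Function.update j l a := by
      funext m
      by_cases hm : m = l
      · subst hm
        simp [Equiv.piSplitAt, Function.update_self]
      · simp [Equiv.piSplitAt, hm, Function.update_of_ne hm]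
    rw [he]
    have h1 : ∀ x : {m : {l : Fin d // l ≠ k} // m ≠ l},
        Function.update j l a x.1 = j x.1 := fun x => Function.update_of_ne x.2 _ _
    simp [h1]
  · intro f _ hf
    have : ∃ m, f m ≠ j m.1 := by
      by_contra hc
      push_neg at hc
      exact hf (funext hc)
    obtain ⟨m, hm⟩ := this
    have hz : (∏ m' : {m : {l : Fin d // l ≠ k} // m ≠ l},
        if ((Equiv.piSplitAt l (fun m : {l : Fin d // l ≠ k} => Fin (p m.1))).symm (a, f)) m'.1
          = j m'.1 then (1:ℝ) else 0) = 0 := by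
      refine Finset.prod_eq_zero (Finset.mem_univ m) ?_
      have : ((Equiv.piSplitAt l (fun m : {l : Fin d // l ≠ k} => Fin (p m.1))).symm (a, f)) m.1
          = f m := by simp [Equiv.piSplitAt, m.2]
      rw [this, if_neg hm]
    rw [hz, zero_mul]
  · intro h
    exact absurd (Finset.mem_univ _) h

end Reindex

lemma prod_split_ne {ι : Type*} [Fintype ι] [DecidableEq ι] {M : Type*} [CommMonoid M]
    (f : ι → M) (a : ι) : ∏ i, f i = f a * ∏ i : {i // i ≠ a}, f i.1 := by
  rw [← Finset.mul_prod_erase Finset.univ f (Finset.mem_univ a)]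
  congr 1
  exact Finset.prod_subtype (Finset.univ.erase a) (fun x => by simp) f

section TraceId

variable {d : ℕ} {k₀ : Fin d} {p r : Fin d → ℕ}

lemma merge_apply_self (k : Fin d) (a : Fin (p k)) (b) : (mergeIdx p k a b) k = a := by
  simp [mergeIdx]

lemma merge_apply_ne (k : Fin d) (i : Fin (p k)) (j) (m : {l : Fin d // l ≠ k}) :
    (mergeIdx p k i j) m.1 = j m := by
  simp only [mergeIdx, dif_neg m.2]

lemma trace_E_single (X : TIdx p → ℝ)
    (U : ∀ l : {l : Fin d // l ≠ k₀}, Matrix (Fin (p l.1)) (Fin (r l.1)) ℝ)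
    (l : {l : Fin d // l ≠ k₀}) :
    ((matricize k₀ X)ᵀ * (matricize k₀ X) * Emat U {l}).trace
      = mfrobSq ((U l)ᵀ * matricize l.1 X) := by
  classical
  set A := matricize k₀ X with hA
  set P := U l * (U l)ᵀ with hP
  -- the common middle form
  set G : Fin (r l.1) → TIdx p → ℝ := fun c ξ =>
    ∑ a : Fin (p l.1), (X ξ * X (Function.update ξ l.1 a)) * (U l a c * U l (ξ l.1) c)
    with hG
  have hPapp : ∀ (a a' : Fin (p l.1)), P a a' = ∑ c, U l a c * U l a' c := by
    intro a a'
    simp [hP, Matrix.mul_apply]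
  -- LHS = ∑ c, ∑ ξ, G c ξ
  have hEapp : ∀ j' j, Emat U {l} j' j
      = (∏ m : {m : {l' : Fin d // l' ≠ k₀} // m ≠ l}, if j' m.1 = j m.1 then (1:ℝ) else 0)
        * P (j' l) (j l) := by
    intro j' j
    rw [Emat, kron,
      prod_split_ne (fun m => (if m ∈ ({l} : Finset _) then U m * (U m)ᵀ else 1) (j' m) (j m)) l]
    rw [if_pos (Finset.mem_singleton_self l), mul_comm]
    congr 1
    refine Finset.prod_congr rfl fun m _ => ?_
    rw [if_neg (by simpa using m.2), Matrix.one_apply]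
  have lhs_eq : (Aᵀ * A * Emat U {l}).trace = ∑ ξ : TIdx p, ∑ c, G c ξ := by
    calc (Aᵀ * A * Emat U {l}).trace
        = ∑ j, ∑ j', (Aᵀ * A) j j' * Emat U {l} j' j := by
          simp only [Matrix.trace, Matrix.diag]
          exact Finset.sum_congr rfl fun j _ => Matrix.mul_apply
      _ = ∑ j, ∑ j',
            (∏ m : {m : {l' : Fin d // l' ≠ k₀} // m ≠ l}, if j' m.1 = j m.1 then (1:ℝ) else 0)
              * ((Aᵀ * A) j j' * P (j' l) (j l)) := by
          refine Finset.sum_congr rfl fun j _ => Finset.sum_congr rfl fun j' _ => ?_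
          rw [hEapp]; ring
      _ = ∑ j, ∑ a : Fin (p l.1),
            (Aᵀ * A) j (Function.update j l a) * P ((Function.update j l a) l) (j l) := by
          refine Finset.sum_congr rfl fun j _ => ?_
          exact delta_collapse l j (fun j' => (Aᵀ * A) j j' * P (j' l) (j l))
      _ = ∑ j, ∑ a : Fin (p l.1), ∑ i,
            (A i j * A i (Function.update j l a)) * P a (j l) := by
          refine Finset.sum_congr rfl fun j _ => Finset.sum_congr rfl fun a _ => ?_
          rw [Function.update_self, Matrix.mul_apply, Finset.sum_mul]
          simp [Matrix.transpose_apply]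
      _ = ∑ j, ∑ i, ∑ a : Fin (p l.1),
            (A i j * A i (Function.update j l a)) * P a (j l) := by
          exact Finset.sum_congr rfl fun j _ => Finset.sum_comm
      _ = ∑ i, ∑ j, ∑ a : Fin (p l.1),
            (A i j * A i (Function.update j l a)) * P a (j l) := Finset.sum_comm
      _ = ∑ i, ∑ j, ∑ c, G c (mergeIdx p k₀ i j) := by
          refine Finset.sum_congr rfl fun i _ => Finset.sum_congr rfl fun j _ => ?_
          rw [← Finset.sum_comm]
          refine Finset.sum_congr rfl fun a _ => ?_
          have h1 : A i j = X (mergeIdx p k₀ i j) := rfl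
          have h2 : A i (Function.update j l a) = X (Function.update (mergeIdx p k₀ i j) l.1 a) := by
            show X (mergeIdx p k₀ i (Function.update j l a)) = _
            rw [merge_update]
          have h3 : j l = (mergeIdx p k₀ i j) l.1 := (merge_apply_ne k₀ i j l).symm
          rw [hPapp, Finset.mul_sum, h1, h2, h3]
      _ = ∑ ξ : TIdx p, ∑ c, G c ξ := by
          rw [← Equiv.sum_comp (modeEquiv p k₀) (fun ξ => ∑ c, G c ξ), Fintype.sum_prod_type]
          rfl
  -- RHS = ∑ c, ∑ ξ, G c ξ
  have rhs_eq : mfrobSq ((U l)ᵀ * matricize l.1 X) = ∑ c, ∑ ξ : TIdx p, G c ξ := by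
    have expand : ∀ (c : Fin (r l.1)) b,
        ((U l)ᵀ * matricize l.1 X) c b = ∑ a, U l a c * X (mergeIdx p l.1 a b) := by
      intro c b
      simp [Matrix.mul_apply, matricize]
    calc mfrobSq ((U l)ᵀ * matricize l.1 X)
        = ∑ c, ∑ b, ∑ a', ∑ a, (U l a' c * X (mergeIdx p l.1 a' b))
            * (U l a c * X (mergeIdx p l.1 a b)) := by
          rw [mfrobSq]
          refine Finset.sum_congr rfl fun c _ => Finset.sum_congr rfl fun b _ => ?_
          rw [expand, sq, Fintype.sum_mul_sum]
      _ = ∑ c, ∑ a', ∑ b, ∑ a, (U l a' c * X (mergeIdx p l.1 a' b))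
            * (U l a c * X (mergeIdx p l.1 a b)) := by
          exact Finset.sum_congr rfl fun c _ => Finset.sum_comm
      _ = ∑ c, ∑ a', ∑ b, G c (mergeIdx p l.1 a' b) := by
          refine Finset.sum_congr rfl fun c _ => Finset.sum_congr rfl fun a' _ =>
            Finset.sum_congr rfl fun b _ => ?_
          rw [hG]
          refine Finset.sum_congr rfl fun a _ => ?_
          have h1 : Function.update (mergeIdx p l.1 a' b) l.1 a = mergeIdx p l.1 a b :=
            update_merge l.1 a' a b
          have h2 : (mergeIdx p l.1 a' b) l.1 = a' := merge_apply_self l.1 a' b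
          rw [h1, h2]
          ring
      _ = ∑ c, ∑ ξ : TIdx p, G c ξ := by
          refine Finset.sum_congr rfl fun c _ => ?_
          rw [← Equiv.sum_comp (modeEquiv p l.1) (G c), Fintype.sum_prod_type]
          rfl
  rw [lhs_eq, rhs_eq, Finset.sum_comm]

end TraceId

section Induct

variable {d : ℕ} {k₀ : Fin d} {p r : Fin d → ℕ}
  (U : ∀ l : {l : Fin d // l ≠ k₀}, Matrix (Fin (p l.1)) (Fin (r l.1)) ℝ)

lemma Emat_comm (hU : ∀ l, (U l)ᵀ * U l = 1) (s t : Finset {l : Fin d // l ≠ k₀}) :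
    (1 - Emat U s) * (1 - Emat U t) = (1 - Emat U t) * (1 - Emat U s) := by
  simp only [Matrix.sub_mul, Matrix.mul_sub, Matrix.one_mul, Matrix.mul_one,
    Emat_mul U hU, Finset.union_comm s t]
  abel

lemma Emat_idem (hU : ∀ l, (U l)ᵀ * U l = 1) (s : Finset {l : Fin d // l ≠ k₀}) :
    (1 - Emat U s) * (1 - Emat U s) = 1 - Emat U s := by
  have h := Emat_mul U hU s s
  rw [Finset.union_self] at h
  calc (1 - Emat U s) * (1 - Emat U s)
      = 1 - Emat U s - Emat U s + Emat U s * Emat U s := by noncomm_ring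
    _ = 1 - Emat U s := by rw [h]; abel

lemma Emat_proj (hU : ∀ l, (U l)ᵀ * U l = 1) (s t : Finset {l : Fin d // l ≠ k₀}) :
    ((1 - Emat U s) * (1 - Emat U t))ᵀ * ((1 - Emat U s) * (1 - Emat U t))
      = (1 - Emat U s) * (1 - Emat U t) := by
  rw [Matrix.transpose_mul, Matrix.transpose_sub, Matrix.transpose_one, Emat_transpose,
    Matrix.transpose_sub, Matrix.transpose_one, Emat_transpose]
  calc (1 - Emat U t) * (1 - Emat U s) * ((1 - Emat U s) * (1 - Emat U t))
      = (1 - Emat U t) * ((1 - Emat U s) * (1 - Emat U s)) * (1 - Emat U t) := by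
        noncomm_ring
    _ = (1 - Emat U t) * (1 - Emat U s) * (1 - Emat U t) := by rw [Emat_idem U hU]
    _ = (1 - Emat U s) * (1 - Emat U t) * (1 - Emat U t) := by rw [Emat_comm U hU]
    _ = (1 - Emat U s) * ((1 - Emat U t) * (1 - Emat U t)) := by rw [Matrix.mul_assoc]
    _ = (1 - Emat U s) * (1 - Emat U t) := by rw [Emat_idem U hU]

lemma trace_resid_bound (hU : ∀ l, (U l)ᵀ * U l = 1)
    (A : Matrix (Fin (p k₀)) (∀ l : {l : Fin d // l ≠ k₀}, Fin (p l.1)) ℝ)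
    (s : Finset {l : Fin d // l ≠ k₀}) :
    (Aᵀ * A * (1 - Emat U s)).trace
      ≤ ∑ l ∈ s, (Aᵀ * A * (1 - Emat U {l})).trace := by
  classical
  induction s using Finset.induction_on with
  | empty => simp [Emat_empty]
  | insert _ _ hl ih =>
    rename_i l s
    have hsplit : 1 - Emat U (insert l s)
        = (1 - Emat U {l}) + Emat U {l} * (1 - Emat U s) := by
      rw [Matrix.mul_sub, Matrix.mul_one, Emat_mul U hU, ← Finset.insert_eq]
      abel
    have key : (Aᵀ * A * (Emat U {l} * (1 - Emat U s))).trace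
        ≤ (Aᵀ * A * (1 - Emat U s)).trace := by
      have h0 : 0 ≤ (Aᵀ * A * ((1 - Emat U {l}) * (1 - Emat U s))).trace :=
        trace_proj_nonneg A _ (Emat_proj U hU {l} s)
      have h1 : Aᵀ * A * ((1 - Emat U {l}) * (1 - Emat U s))
          = Aᵀ * A * (1 - Emat U s) - Aᵀ * A * (Emat U {l} * (1 - Emat U s)) := by
        noncomm_ring
      rw [h1, Matrix.trace_sub] at h0
      linarith
    rw [hsplit, Matrix.mul_add, Matrix.trace_add, Finset.sum_insert hl]
    exact add_le_add le_rfl (key.trans ih)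

end Induct


/-- Frobenius-norm bound for the residual of a multilinear projection
(third part of Lemma 1 of Zhang–Han, 2018):
`‖M_1(X) W‖_F² ≤ Σ_{l=2}^d ‖U_{l⊥}ᵀ M_l(X)‖_F²` whenever `W` has orthonormal
columns orthogonal to those of `U_2 ⊗ ⋯ ⊗ U_d`. -/
theorem matricization_projection_residual_bound {d : ℕ} (hd : 2 ≤ d)
    (k₀ : Fin d) (hk₀ : (k₀ : ℕ) = 0)
    {p r : Fin d → ℕ} (X : TIdx p → ℝ)
    (U : ∀ l : {l : Fin d // l ≠ k₀}, Matrix (Fin (p l.1)) (Fin (r l.1)) ℝ)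
    (hU : ∀ l, (U l)ᵀ * U l = 1)
    (κ : Type) [Fintype κ] [DecidableEq κ]
    (W : Matrix (∀ l : {l : Fin d // l ≠ k₀}, Fin (p l.1)) κ ℝ)
    (hW : Wᵀ * W = 1)
    (hWo : (kron U)ᵀ * W = 0) :
    mfrobSq (matricize k₀ X * W) ≤
      ∑ l : {l : Fin d // l ≠ k₀},
        (tfrobSq X - mfrobSq ((U l)ᵀ * matricize l.1 X)) := by
  classical
  set A := matricize k₀ X with hA
  set K := kron U with hK
  have hKK : Kᵀ * K = 1 := by
    rw [hK, kron_transpose, kron_mul]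
    rw [show (fun l : {l : Fin d // l ≠ k₀} => (U l)ᵀ * U l)
        = (fun l : {l : Fin d // l ≠ k₀} => (1 : Matrix (Fin (r l.1)) (Fin (r l.1)) ℝ))
      from funext hU]
    exact kron_one
  have hWK : Wᵀ * K = 0 := by
    have := congrArg Matrix.transpose hWo
    rw [Matrix.transpose_mul, Matrix.transpose_transpose, Matrix.transpose_zero] at this
    exact this
  -- the complementary projector is idempotent symmetric
  set G : Matrix (∀ l : {l : Fin d // l ≠ k₀}, Fin (p l.1))
      (∀ l : {l : Fin d // l ≠ k₀}, Fin (p l.1)) ℝ := 1 - K * Kᵀ - W * Wᵀ with hG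
  have hGproj : Gᵀ * G = G := by
    have hGT : Gᵀ = G := by
      rw [hG]
      simp [Matrix.transpose_sub, Matrix.transpose_mul]
    rw [hGT, hG]
    have h1 : K * Kᵀ * (K * Kᵀ) = K * Kᵀ := by
      rw [Matrix.mul_assoc, ← Matrix.mul_assoc Kᵀ, hKK, Matrix.one_mul]
    have h2 : W * Wᵀ * (W * Wᵀ) = W * Wᵀ := by
      rw [Matrix.mul_assoc, ← Matrix.mul_assoc Wᵀ, hW, Matrix.one_mul]
    have h3 : K * Kᵀ * (W * Wᵀ) = 0 := by
      rw [Matrix.mul_assoc, ← Matrix.mul_assoc Kᵀ, hWo, Matrix.zero_mul, Matrix.mul_zero]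
    have h4 : W * Wᵀ * (K * Kᵀ) = 0 := by
      rw [Matrix.mul_assoc, ← Matrix.mul_assoc Wᵀ, hWK, Matrix.zero_mul, Matrix.mul_zero]
    calc (1 - K * Kᵀ - W * Wᵀ) * (1 - K * Kᵀ - W * Wᵀ)
        = 1 - K * Kᵀ - W * Wᵀ - K * Kᵀ - W * Wᵀ
            + (K * Kᵀ * (K * Kᵀ) + W * Wᵀ * (K * Kᵀ)
              + (K * Kᵀ * (W * Wᵀ) + W * Wᵀ * (W * Wᵀ))) := by noncomm_ring
      _ = 1 - K * Kᵀ - W * Wᵀ := by rw [h1, h2, h3, h4]; abel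
  have hGnn : 0 ≤ (Aᵀ * A * G).trace := trace_proj_nonneg A G hGproj
  have e0 : mfrobSq (A * W) = (Aᵀ * A * (W * Wᵀ)).trace := by
    rw [mfrobSq_eq_trace, Matrix.transpose_mul,
      show Wᵀ * Aᵀ * (A * W) = Wᵀ * (Aᵀ * A * W) by simp only [Matrix.mul_assoc],
      Matrix.trace_mul_comm, Matrix.mul_assoc]
  have eG : (Aᵀ * A * G).trace
      = (Aᵀ * A * (1 - Emat U Finset.univ)).trace - (Aᵀ * A * (W * Wᵀ)).trace := by
    rw [hG, ← Emat_univ]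
    rw [show Aᵀ * A * (1 - Emat U Finset.univ - W * Wᵀ)
        = Aᵀ * A * (1 - Emat U Finset.univ) - Aᵀ * A * (W * Wᵀ) by noncomm_ring,
      Matrix.trace_sub]
  have step1 : mfrobSq (A * W) ≤ (Aᵀ * A * (1 - Emat U Finset.univ)).trace := by
    rw [e0]
    rw [eG] at hGnn
    linarith
  have step2 := trace_resid_bound U hU A Finset.univ
  have traceA : (Aᵀ * A).trace = tfrobSq X := by
    rw [← mfrobSq_eq_trace, hA, ← tfrobSq_eq_mfrobSq]
  have step3 : ∀ l : {l : Fin d // l ≠ k₀},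
      (Aᵀ * A * (1 - Emat U {l})).trace
        = tfrobSq X - mfrobSq ((U l)ᵀ * matricize l.1 X) := by
    intro l
    rw [show Aᵀ * A * (1 - Emat U {l}) = Aᵀ * A - Aᵀ * A * Emat U {l} by noncomm_ring,
      Matrix.trace_sub, traceA, trace_E_single X U l]
  calc mfrobSq (A * W) ≤ (Aᵀ * A * (1 - Emat U Finset.univ)).trace := step1
    _ ≤ ∑ l : {l : Fin d // l ≠ k₀}, (Aᵀ * A * (1 - Emat U {l})).trace := step2
    _ = ∑ l : {l : Fin d // l ≠ k₀},
        (tfrobSq X - mfrobSq ((U l)ᵀ * matricize l.1 X)) :=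
      Finset.sum_congr rfl fun l _ => step3 l

end
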